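/- Define m_n as the minimum of Σᵢ λᵢ² over partitions λ of n with nonnegative rank. Then for all n ≥ 4, m_n ≥ n^{4/3}/4. -/

import Mathlib

/-- The minimal sum of squares of parts over partitions of n with nonnegative rank. -/
noncomputable def minSumSq (n : ℕ) : ℕ :=
  sInf {s | ∃ P : n.Partition, P.parts.card ≤ P.parts.sup ∧
    (P.parts.map (fun x => x ^ 2)).sum = s}

lemma aux_two_mul (a : ℕ) (m : Multiset ℕ) :
    2 * a * m.sum ≤ Multiset.card m * a ^ 2 + (m.map (fun x => x ^ 2)).sum := by
  induction m using Multiset.induction with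
  | empty => simp
  | cons b m ih =>
    simp only [Multiset.sum_cons, Multiset.card_cons, Multiset.map_cons]
    have := two_mul_le_add_sq a b
    nlinarith

lemma aux_cs (m : Multiset ℕ) :
    m.sum ^ 2 ≤ Multiset.card m * (m.map (fun x => x ^ 2)).sum := by
  induction m using Multiset.induction with
  | empty => simp
  | cons a m ih =>
    simp only [Multiset.sum_cons, Multiset.card_cons, Multiset.map_cons]
    have h := aux_two_mul a m
    nlinarith

/-- For `n ≥ 4`, `minSumSq n ≥ n^(4/3) / 4`. -/
theorem stmt_13 (n : ℕ) (hn : 4 ≤ n) :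
    (n : ℝ) ^ ((4 : ℝ) / 3) / 4 ≤ (minSumSq n : ℝ) := by
  have hne : {s | ∃ P : n.Partition, P.parts.card ≤ P.parts.sup ∧
      (P.parts.map (fun x => x ^ 2)).sum = s}.Nonempty := by
    have h0 : n ≠ 0 := by omega
    refine ⟨n ^ 2, Nat.Partition.ofSums n {n} rfl, ?_, ?_⟩
    · simp only [Nat.Partition.ofSums, Multiset.filter_singleton]
      simp [h0]; omega
    · simp [Nat.Partition.ofSums, Multiset.filter_singleton, h0]
  have hmem := Nat.sInf_mem hne
  obtain ⟨P, hcard, hsum⟩ := hmem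
  set Q : ℕ := minSumSq n with hQ
  set m := P.parts with hm
  -- each part's square is at most Q
  have hsq_le : ∀ b ∈ m, b ^ 2 ≤ Q := by
    intro b hb
    have : b ^ 2 ∈ m.map (fun x => x ^ 2) := Multiset.mem_map_of_mem _ hb
    calc b ^ 2 ≤ (m.map (fun x => x ^ 2)).sum := Multiset.single_le_sum (fun _ _ => Nat.zero_le _) _ this
    _ = Q := hsum
  have hsup : m.sup ^ 2 ≤ Q := by
    have hle : m.sup ≤ Nat.sqrt Q := by
      apply Multiset.sup_le.2
      intro b hb
      have := hsq_le b hb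
      exact Nat.le_sqrt.2 (by nlinarith)
    calc m.sup ^ 2 ≤ Nat.sqrt Q ^ 2 := Nat.pow_le_pow_left hle 2
    _ ≤ Q := Nat.sqrt_le' Q
  have hcs : n ^ 2 ≤ Multiset.card m * Q := by
    have := aux_cs m
    rw [P.parts_sum, hsum] at this; exact this
  -- n^4 ≤ Q^3
  have hkey : n ^ 4 ≤ Q ^ 3 := by
    have h1 : Multiset.card m ≤ m.sup := hcard
    have h2 : (Multiset.card m) ^ 2 ≤ Q := le_trans (Nat.pow_le_pow_left h1 2) hsup
    calc n ^ 4 = (n ^ 2) ^ 2 := by ring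
    _ ≤ (Multiset.card m * Q) ^ 2 := Nat.pow_le_pow_left hcs 2
    _ = (Multiset.card m) ^ 2 * Q ^ 2 := by ring
    _ ≤ Q * Q ^ 2 := Nat.mul_le_mul_right _ h2
    _ = Q ^ 3 := by ring
  -- pass to reals
  have hQR : ((n : ℝ)) ^ (4 : ℕ) ≤ ((Q : ℝ)) ^ (3 : ℕ) := by
    exact_mod_cast hkey
  have hn0 : (0 : ℝ) ≤ (n : ℝ) := by positivity
  have hQ0 : (0 : ℝ) ≤ (Q : ℝ) := by positivity
  have hmain : (n : ℝ) ^ ((4 : ℝ) / 3) ≤ (Q : ℝ) := by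
    have h1 : (n : ℝ) ^ ((4 : ℝ) / 3) = ((n : ℝ) ^ (4 : ℕ)) ^ ((1 : ℝ) / 3) := by
      rw [← Real.rpow_natCast (n:ℝ) 4, ← Real.rpow_mul hn0]
      norm_num
    have h2 : ((n : ℝ) ^ (4 : ℕ)) ^ ((1 : ℝ) / 3) ≤ ((Q : ℝ) ^ (3 : ℕ)) ^ ((1 : ℝ) / 3) :=
      Real.rpow_le_rpow (by positivity) hQR (by norm_num)
    have h3 : ((Q : ℝ) ^ (3 : ℕ)) ^ ((1 : ℝ) / 3) = (Q : ℝ) := by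
      rw [← Real.rpow_natCast (Q:ℝ) 3, ← Real.rpow_mul hQ0]
      norm_num
    rw [h1]; rw [h3] at h2; exact h2
  have hpos : (0 : ℝ) ≤ (n : ℝ) ^ ((4 : ℝ) / 3) := Real.rpow_nonneg hn0 _
  linarith [div_le_self hpos (by norm_num : (1:ℝ) ≤ 4)]
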